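/- Let B₁ and B₂ be invertible (n+m₁)×(n+m₁) and (n+m₂)×(n+m₂) complex matrices respectively, let Q be the (n+m₁)×(n+m₂) matrix with the n×n identity in the upper-left block and zeros elsewhere, and let w ∈ ℂ. Then the determinant of the block matrix M(w) = [[B₁, wQ],[w̄'Q^T, B₂]] (where w̄' ∈ ℂ is a second scalar) equals det(B₁)·det(B₂ − w·w̄'·Q^T B₁⁻¹ Q), which is a polynomial in the product ζ = w·w̄' of degree at most n with coefficients depending only on B₁, B₂. -/

import Mathlib

open Matrix Polynomial

theorem type2_dispersion_polynomial (n m₁ m₂ : ℕ)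
    (B₁ : Matrix (Fin n ⊕ Fin m₁) (Fin n ⊕ Fin m₁) ℂ)
    (B₂ : Matrix (Fin n ⊕ Fin m₂) (Fin n ⊕ Fin m₂) ℂ)
    [Invertible B₁] [Invertible B₂]
    (Q : Matrix (Fin n ⊕ Fin m₁) (Fin n ⊕ Fin m₂) ℂ)
    (hQ : Q = fromBlocks (1 : Matrix (Fin n) (Fin n) ℂ) 0 0 0) :
    ∃ c : Fin (n + 1) → ℂ, ∀ w w' : ℂ,
      (fromBlocks B₁ (w • Q) (w' • Qᵀ) B₂).det
        = B₁.det * (B₂ - (w * w') • (Qᵀ * B₁⁻¹ * Q)).det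
      ∧ (fromBlocks B₁ (w • Q) (w' • Qᵀ) B₂).det
        = ∑ j : Fin (n + 1), c j * (w * w') ^ (j : ℕ) := by
  set M : Matrix (Fin n ⊕ Fin m₂) (Fin n ⊕ Fin m₂) ℂ := Qᵀ * B₁⁻¹ * Q with hM
  have hQcol : ∀ (a : Fin m₂) k, Q k (Sum.inr a) = 0 := by
    intro a k; subst hQ; cases k <;> simp
  have hMrow : ∀ a j, M (Sum.inr a) j = 0 := by
    intro a j
    simp [hM, Matrix.mul_assoc, Matrix.mul_apply, hQcol]
  set p : ℂ[X] := (Matrix.of fun i j => C (B₂ i j) - X * C (M i j)).det with hp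
  have hentry : ∀ i j, (C (B₂ i j) - X * C (M i j)).natDegree
      ≤ if i.isLeft then 1 else 0 := by
    intro i j
    cases i with
    | inl a =>
      simp only [Sum.isLeft, if_true]
      refine (natDegree_sub_le _ _).trans ?_
      simp only [natDegree_C, max_le_iff]
      exact ⟨Nat.zero_le _, natDegree_mul_le.trans (by simp)⟩
    | inr a =>
      simp [hMrow]
  have hdeg : p.natDegree ≤ n := by
    rw [hp, det_apply']
    refine natDegree_sum_le_of_forall_le _ _ ?_
    intro σ _
    refine natDegree_mul_le.trans ?_
    rw [natDegree_intCast, Nat.zero_add]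
    refine (natDegree_prod_le _ _).trans ?_
    have hle : ∑ i : Fin n ⊕ Fin m₂,
        ((Matrix.of fun i j => C (B₂ i j) - X * C (M i j)) (σ i) i).natDegree
        ≤ ∑ i : Fin n ⊕ Fin m₂, (if (σ i).isLeft then 1 else 0) :=
      Finset.sum_le_sum (fun i _ => hentry (σ i) i)
    refine hle.trans ?_
    rw [Equiv.sum_comp σ (fun i : Fin n ⊕ Fin m₂ => if i.isLeft then 1 else 0),
      Fintype.sum_sum_type]
    simp
  refine ⟨fun j => B₁.det * p.coeff j, fun w w' => ?_⟩
  have h1 : (fromBlocks B₁ (w • Q) (w' • Qᵀ) B₂).det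
      = B₁.det * (B₂ - (w * w') • M).det := by
    rw [det_fromBlocks₁₁]
    congr 2
    rw [invOf_eq_nonsing_inv]
    rw [Matrix.smul_mul, Matrix.smul_mul, Matrix.mul_smul, smul_smul, mul_comm w' w, hM]
  have h2 : ∀ ζ : ℂ, (B₂ - ζ • M).det = p.eval ζ := by
    intro ζ
    rw [hp, ← coe_evalRingHom, RingHom.map_det]
    congr 1
    ext i j
    simp [Matrix.sub_apply, Matrix.smul_apply, smul_eq_mul]
    ring
  refine ⟨h1, ?_⟩
  rw [h1, h2 (w * w'),
    Polynomial.eval_eq_sum_range' (Nat.lt_succ_of_le hdeg) (w * w'), Finset.mul_sum,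
    Fin.sum_univ_eq_sum_range (fun j => B₁.det * p.coeff j * (w * w') ^ j) (n + 1)]
  exact Finset.sum_congr rfl (fun i _ => (mul_assoc _ _ _).symm)
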